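/- Suppose all entries of M^N are positive for some N ≥ 1 (so the subshift is mixing). Let A : X → GL(d,ℝ) be β-Hölder (‖A(x) − A(y)‖ ≤ c₀ d(x,y)^β for all x,y, for some c₀ > 0, β ∈ (0,1]), and assume the sub-exponential growth condition: for every ε > 0 there is K_ε ≥ 1 with ‖𝒜ⁿ_x‖ ≤ K_ε e^{ε|n|} and ‖(𝒜ⁿ_x)^{−1}‖ ≤ K_ε e^{ε|n|} for all x ∈ X and n ∈ ℤ. If the periodic data is bounded, i.e. there is C₀ such that ‖𝒜ᵏ_p‖ ≤ C₀ and ‖(𝒜ᵏ_p)^{−1}‖ ≤ C₀ for every p ∈ X and k ≥ 1 with fᵏp = p, then the set of all values of the cocycle is bounded: there is C such that ‖𝒜ⁿ_x‖ ≤ C and ‖(𝒜ⁿ_x)^{−1}‖ ≤ C for all x ∈ X and n ∈ ℤ. -/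

import Mathlib

open scoped Classical

/-- The subshift of finite type determined by a 0-1 transition matrix `M`:
the set of two-sided sequences all of whose transitions are allowed by `M`. -/
def SFT {k : ℕ} (M : Matrix (Fin k) (Fin k) ℕ) : Set (ℤ → Fin k) :=
  {x | ∀ n : ℤ, M (x n) (x (n + 1)) = 1}

/-- The (left) shift map `(f x)_n = x_{n+1}`. -/
def shift {k : ℕ} (x : ℤ → Fin k) : ℤ → Fin k := fun n => x (n + 1)

/-- `sep x y = min {|i| : x_i ≠ y_i}` (defined for `x ≠ y`). -/
noncomputable def sep {k : ℕ} (x y : ℤ → Fin k) : ℕ :=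
  sInf {m : ℕ | ∃ i : ℤ, i.natAbs = m ∧ x i ≠ y i}

/-- The distance `d(x,y) = λ^{sep x y}` for `x ≠ y`, and `d(x,x) = 0`. -/
noncomputable def dSFT {k : ℕ} (lam : ℝ) (x y : ℤ → Fin k) : ℝ :=
  if x = y then 0 else lam ^ sep x y

open scoped MatrixGroups Matrix.Norms.L2Operator

/-- The `GL(d,ℝ)`-valued cocycle generated by `A` over the shift:
`𝒜⁰_x = I` and `𝒜ⁿ⁺¹_x = A(fⁿx) · 𝒜ⁿ_x`. -/
def coc {k d : ℕ} (A : (ℤ → Fin k) → GL (Fin d) ℝ) :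
    (ℤ → Fin k) → ℕ → GL (Fin d) ℝ
  | _, 0 => 1
  | x, n + 1 => A (shift^[n] x) * coc A x n

/-- The inverse shift map `(f⁻¹ x)_n = x_{n-1}`. -/
def shiftInv {k : ℕ} (x : ℤ → Fin k) : ℤ → Fin k := fun n => x (n - 1)

/-- The extension of the cocycle to `ℤ`: `𝒜⁻ⁿ_x = (𝒜ⁿ_{f⁻ⁿx})⁻¹`. -/
def cocZ {k d : ℕ} (A : (ℤ → Fin k) → GL (Fin d) ℝ) (x : ℤ → Fin k) (n : ℤ) :
    GL (Fin d) ℝ :=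
  if 0 ≤ n then coc A x n.toNat else (coc A (shiftInv^[(-n).toNat] x) (-n).toNat)⁻¹

/- ### infrastructure -/

lemma shift_iter_apply {k : ℕ} (x : ℤ → Fin k) (a : ℕ) (i : ℤ) :
    shift^[a] x i = x (i + a) := by
  induction a generalizing x i with
  | zero => simp
  | succ a ih =>
    rw [Function.iterate_succ_apply, ih]
    simp only [shift]
    congr 1
    push_cast
    ring

lemma shiftInv_iter_apply {k : ℕ} (x : ℤ → Fin k) (a : ℕ) (i : ℤ) :
    shiftInv^[a] x i = x (i - a) := by
  induction a generalizing x i with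
  | zero => simp
  | succ a ih =>
    rw [Function.iterate_succ_apply, ih]
    simp only [shiftInv]
    congr 1
    push_cast
    ring

lemma SFT_shift_iter {k : ℕ} {M : Matrix (Fin k) (Fin k) ℕ} {x : ℤ → Fin k}
    (hx : x ∈ SFT M) (a : ℕ) : shift^[a] x ∈ SFT M := by
  intro n
  rw [shift_iter_apply, shift_iter_apply]
  have := hx (n + a)
  convert this using 3
  ring

lemma SFT_shiftInv_iter {k : ℕ} {M : Matrix (Fin k) (Fin k) ℕ} {x : ℤ → Fin k}
    (hx : x ∈ SFT M) (a : ℕ) : shiftInv^[a] x ∈ SFT M := by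
  intro n
  rw [shiftInv_iter_apply, shiftInv_iter_apply]
  have := hx (n - a)
  convert this using 3
  ring

lemma coc_succ_right {k d : ℕ} (A : (ℤ → Fin k) → GL (Fin d) ℝ) (x : ℤ → Fin k) (n : ℕ) :
    coc A x (n + 1) = coc A (shift x) n * A x := by
  induction n generalizing x with
  | zero => simp [coc]
  | succ n ih =>
    have h1 : coc A x (n + 1 + 1) = A (shift^[n + 1] x) * coc A x (n + 1) := rfl
    rw [h1, ih]
    have h2 : coc A (shift x) (n + 1) = A (shift^[n] (shift x)) * coc A (shift x) n := rfl
    rw [h2, Function.iterate_succ_apply, mul_assoc]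

lemma coc_add {k d : ℕ} (A : (ℤ → Fin k) → GL (Fin d) ℝ) (x : ℤ → Fin k) (a b : ℕ) :
    coc A x (a + b) = coc A (shift^[a] x) b * coc A x a := by
  induction b with
  | zero => simp [coc]
  | succ b ih =>
    have h1 : coc A x (a + (b + 1)) = A (shift^[a + b] x) * coc A x (a + b) := rfl
    rw [h1, ih, ← mul_assoc]
    congr 1
    have h2 : coc A (shift^[a] x) (b + 1) = A (shift^[b] (shift^[a] x)) * coc A (shift^[a] x) b := rfl
    rw [h2]
    congr 2
    rw [← Function.iterate_add_apply]
    congr 1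
    omega

lemma dSFT_le {k : ℕ} {lam : ℝ} (hlam0 : 0 < lam) (hlam1 : lam < 1)
    {x y : ℤ → Fin k} {j : ℕ} (h : ∀ i : ℤ, i.natAbs < j → x i = y i) :
    dSFT lam x y ≤ lam ^ j := by
  unfold dSFT
  split_ifs with he
  · positivity
  · apply pow_le_pow_of_le_one hlam0.le hlam1.le
    have hne : ∃ i : ℤ, x i ≠ y i := by
      by_contra hc
      push_neg at hc
      exact he (funext hc)
    obtain ⟨i0, hi0⟩ := hne
    apply le_csInf
    · exact ⟨i0.natAbs, i0, rfl, hi0⟩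
    rintro m ⟨i, rfl, hi⟩
    by_contra hc
    exact hi (h i (by omega))

lemma dSFT_nonneg {k : ℕ} {lam : ℝ} (hlam0 : 0 < lam) (x y : ℤ → Fin k) :
    0 ≤ dSFT lam x y := by
  unfold dSFT; split_ifs; · rfl
  · positivity

lemma norm_mul₂ {R : Type*} [SeminormedRing R] {a b : R} {a' b' : ℝ}
    (ha : ‖a‖ ≤ a') (hb : ‖b‖ ≤ b') : ‖a * b‖ ≤ a' * b' := by
  have h0a : (0:ℝ) ≤ a' := le_trans (norm_nonneg a) ha
  exact le_trans (norm_mul_le a b) (mul_le_mul ha hb (norm_nonneg b) h0a)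

lemma norm_mul₃ {R : Type*} [SeminormedRing R] {a b c : R} {a' b' c' : ℝ}
    (ha : ‖a‖ ≤ a') (hb : ‖b‖ ≤ b') (hc : ‖c‖ ≤ c') : ‖a * b * c‖ ≤ a' * b' * c' :=
  norm_mul₂ (norm_mul₂ ha hb) hc

/-- path lemma from positive matrix power entries -/
lemma path_of_pow_pos {k : ℕ} {M : Matrix (Fin k) (Fin k) ℕ}
    (hM : ∀ i j, M i j = 0 ∨ M i j = 1) :
    ∀ s : ℕ, ∀ i j : Fin k, 0 < (M ^ s) i j →
      ∃ w : ℕ → Fin k, w 0 = i ∧ w s = j ∧ ∀ t < s, M (w t) (w (t + 1)) = 1 := by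
  intro s
  induction s with
  | zero =>
    intro i j hpos
    have : (1 : Matrix (Fin k) (Fin k) ℕ) i j ≠ 0 := by simpa [pow_zero] using hpos.ne'
    have hij : i = j := by
      by_contra hc
      exact this (Matrix.one_apply_ne hc)
    exact ⟨fun _ => i, rfl, hij ▸ rfl, fun t ht => absurd ht (Nat.not_lt_zero t)⟩
  | succ s ih =>
    intro i j hpos
    rw [pow_succ, Matrix.mul_apply] at hpos
    obtain ⟨l, hl⟩ : ∃ l, 0 < (M ^ s) i l * M l j := by
      by_contra hc
      push_neg at hc
      have : ∑ l, (M ^ s) i l * M l j = 0 :=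
        Finset.sum_eq_zero fun l _ => Nat.le_zero.mp (hc l)
      omega
    rcases Nat.eq_zero_or_pos ((M ^ s) i l) with h0 | h1
    · simp [h0] at hl
    rcases Nat.eq_zero_or_pos (M l j) with h0 | h2
    · simp [h0] at hl
    obtain ⟨w, hw0, hws, hwt⟩ := ih i l h1
    refine ⟨fun t => if t ≤ s then w t else j, by simpa using hw0, by simp [Nat.lt_irrefl], ?_⟩
    intro t ht
    rcases Nat.lt_or_ge t s with h | h
    · have : t ≤ s := h.le
      have h' : t + 1 ≤ s := h
      simpa [this, h'] using hwt t h
    · have hts : t = s := by omega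
      subst hts
      have : ¬ (t + 1 ≤ t) := by omega
      simp only [le_refl, if_true, this, if_false, hws]
      rcases hM l j with h | h
      · omega
      · exact h

section Aux
variable {k d : ℕ}

/-- Stable comparison: if `x` and `z` are forward-asymptotic (so the Hölder differences
decay like `Λ^j`), the "holonomy" `(𝒜ⁿ_z)⁻¹ 𝒜ⁿ_x` stays bounded. -/
lemma stable_aux (A : (ℤ → Fin k) → GL (Fin d) ℝ) (x z : ℤ → Fin k)
    (K E Λ c₀ : ℝ)
    (hH : ∀ j : ℕ, ‖((A (shift^[j] x) : Matrix (Fin d) (Fin d) ℝ)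
        - (A (shift^[j] z) : Matrix (Fin d) (Fin d) ℝ))‖ ≤ c₀ * Λ ^ j)
    (hGx : ∀ j : ℕ, ‖(coc A x j : Matrix (Fin d) (Fin d) ℝ)‖ ≤ K * E ^ j)
    (hGz : ∀ j : ℕ, ‖(((coc A z j)⁻¹ : GL (Fin d) ℝ) : Matrix (Fin d) (Fin d) ℝ)‖ ≤ K * E ^ j)
    (hAz : ∀ j : ℕ, ‖(((A (shift^[j] z))⁻¹ : GL (Fin d) ℝ) : Matrix (Fin d) (Fin d) ℝ)‖ ≤ K * E)
    (n : ℕ) :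
    ‖((((coc A z n)⁻¹ * coc A x n : GL (Fin d) ℝ)) : Matrix (Fin d) (Fin d) ℝ)‖
      ≤ ‖(1 : Matrix (Fin d) (Fin d) ℝ)‖
        + K ^ 3 * c₀ * E * ∑ t ∈ Finset.range n, (E ^ 2 * Λ) ^ t := by
  induction n with
  | zero => simp [coc]
  | succ n ih =>
    have key : (((coc A z (n+1))⁻¹ * coc A x (n+1) : GL (Fin d) ℝ) : Matrix (Fin d) (Fin d) ℝ)
        = (((coc A z n)⁻¹ * coc A x n : GL (Fin d) ℝ) : Matrix (Fin d) (Fin d) ℝ)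
          + (((coc A z n)⁻¹ : GL (Fin d) ℝ) : Matrix (Fin d) (Fin d) ℝ)
            * ((((A (shift^[n] z))⁻¹ : GL (Fin d) ℝ) : Matrix (Fin d) (Fin d) ℝ)
               * ((A (shift^[n] x) : Matrix (Fin d) (Fin d) ℝ)
                  - (A (shift^[n] z) : Matrix (Fin d) (Fin d) ℝ)))
            * (coc A x n : Matrix (Fin d) (Fin d) ℝ) := by
      have hz : coc A z (n+1) = A (shift^[n] z) * coc A z n := rfl
      have hx : coc A x (n+1) = A (shift^[n] x) * coc A x n := rfl
      rw [hz, hx, mul_inv_rev]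
      have h1 : (((A (shift^[n] z))⁻¹ : GL (Fin d) ℝ) : Matrix (Fin d) (Fin d) ℝ)
          * ((A (shift^[n] z)) : Matrix (Fin d) (Fin d) ℝ) = 1 := (A (shift^[n] z)).inv_mul
      simp only [Units.val_mul, mul_assoc]
      rw [← mul_assoc ((((A (shift^[n] z))⁻¹ : GL (Fin d) ℝ)) : Matrix (Fin d) (Fin d) ℝ)]
      nth_rewrite 2 [← one_mul ((coc A x n : Matrix (Fin d) (Fin d) ℝ))]
      rw [← h1]
      noncomm_ring
    rw [key]
    have hterm : ‖(((coc A z n)⁻¹ : GL (Fin d) ℝ) : Matrix (Fin d) (Fin d) ℝ)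
            * ((((A (shift^[n] z))⁻¹ : GL (Fin d) ℝ) : Matrix (Fin d) (Fin d) ℝ)
               * ((A (shift^[n] x) : Matrix (Fin d) (Fin d) ℝ)
                  - (A (shift^[n] z) : Matrix (Fin d) (Fin d) ℝ)))
            * (coc A x n : Matrix (Fin d) (Fin d) ℝ)‖
        ≤ (K * E ^ n) * ((K * E) * (c₀ * Λ ^ n)) * (K * E ^ n) :=
      norm_mul₃ (hGz n) (norm_mul₂ (hAz n) (hH n)) (hGx n)
    have heq : (K * E ^ n) * ((K * E) * (c₀ * Λ ^ n)) * (K * E ^ n)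
        = K ^ 3 * c₀ * E * (E ^ 2 * Λ) ^ n := by ring
    calc ‖_ + _‖ ≤ _ := norm_add_le _ _
      _ ≤ (‖(1 : Matrix (Fin d) (Fin d) ℝ)‖
            + K ^ 3 * c₀ * E * ∑ t ∈ Finset.range n, (E ^ 2 * Λ) ^ t)
          + K ^ 3 * c₀ * E * (E ^ 2 * Λ) ^ n := by
        apply add_le_add ih
        rw [← heq]; exact hterm
      _ = _ := by rw [Finset.sum_range_succ]; ring
end Aux

lemma ring_helper {R : Type*} [Ring R] (Cz Az Ap Api Cpi : R) (h : Ap * Api = 1) :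
    (Cz * Az) * (Api * Cpi) = Cz * Cpi + Cz * ((Az - Ap) * Api) * Cpi := by
  have h2 : Cz * Cpi = Cz * (Ap * Api) * Cpi := by rw [h, mul_one]
  rw [h2]; noncomm_ring

section Aux2
variable {k d : ℕ}

/-- Unstable comparison: if `z` and `p` agree on coordinates `≤ n`, the holonomy
`𝒜ⁿ_z (𝒜ⁿ_p)⁻¹` (built backwards from time `n`) stays bounded. -/
lemma unstable_aux (A : (ℤ → Fin k) → GL (Fin d) ℝ) (z p : ℤ → Fin k)
    (K E Λ c₀ : ℝ) (hΛ0 : 0 ≤ Λ) (hΛ1 : Λ ≤ 1) (hc₀ : 0 ≤ c₀) (hK : 0 ≤ K) (hE : 0 ≤ E)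
    (n : ℕ)
    (hH : ∀ j : ℕ, j ≤ n → ‖((A (shift^[j] z) : Matrix (Fin d) (Fin d) ℝ)
        - (A (shift^[j] p) : Matrix (Fin d) (Fin d) ℝ))‖ ≤ c₀ * Λ ^ (n - j))
    (hGz : ∀ a t : ℕ, ‖(coc A (shift^[a] z) t : Matrix (Fin d) (Fin d) ℝ)‖ ≤ K * E ^ t)
    (hGp : ∀ a t : ℕ,
      ‖(((coc A (shift^[a] p) t)⁻¹ : GL (Fin d) ℝ) : Matrix (Fin d) (Fin d) ℝ)‖ ≤ K * E ^ t)
    (hAp : ∀ j : ℕ,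
      ‖(((A (shift^[j] p))⁻¹ : GL (Fin d) ℝ) : Matrix (Fin d) (Fin d) ℝ)‖ ≤ K * E) :
    ∀ t : ℕ, t ≤ n →
    ‖((coc A (shift^[n-t] z) t * (coc A (shift^[n-t] p) t)⁻¹ : GL (Fin d) ℝ)
        : Matrix (Fin d) (Fin d) ℝ)‖
      ≤ ‖(1 : Matrix (Fin d) (Fin d) ℝ)‖
        + K ^ 3 * c₀ * E * ∑ s ∈ Finset.range t, (E ^ 2 * Λ) ^ s := by
  intro t
  induction t with
  | zero => intro _; simp [coc]
  | succ t ih =>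
    intro ht1
    have iht := ih (by omega)
    set a := n - (t+1) with ha
    have hnt : n - t = a + 1 := by omega
    rw [hnt] at iht
    have hz1 : shift^[a+1] z = shift (shift^[a] z) := Function.iterate_succ_apply' _ _ _
    have hp1 : shift^[a+1] p = shift (shift^[a] p) := Function.iterate_succ_apply' _ _ _
    have hcz : coc A (shift^[a] z) (t+1) = coc A (shift^[a+1] z) t * A (shift^[a] z) := by
      rw [coc_succ_right, hz1]
    have hcp : coc A (shift^[a] p) (t+1) = coc A (shift^[a+1] p) t * A (shift^[a] p) := by
      rw [coc_succ_right, hp1]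
    have key : ((coc A (shift^[a] z) (t+1) * (coc A (shift^[a] p) (t+1))⁻¹ : GL (Fin d) ℝ)
          : Matrix (Fin d) (Fin d) ℝ)
        = ((coc A (shift^[a+1] z) t * (coc A (shift^[a+1] p) t)⁻¹ : GL (Fin d) ℝ)
            : Matrix (Fin d) (Fin d) ℝ)
          + (coc A (shift^[a+1] z) t : Matrix (Fin d) (Fin d) ℝ)
            * (((A (shift^[a] z) : Matrix (Fin d) (Fin d) ℝ)
                - (A (shift^[a] p) : Matrix (Fin d) (Fin d) ℝ))
               * (((A (shift^[a] p))⁻¹ : GL (Fin d) ℝ) : Matrix (Fin d) (Fin d) ℝ))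
            * (((coc A (shift^[a+1] p) t)⁻¹ : GL (Fin d) ℝ) : Matrix (Fin d) (Fin d) ℝ) := by
      rw [hcz, hcp, mul_inv_rev]
      have h1 : ((A (shift^[a] p)) : Matrix (Fin d) (Fin d) ℝ)
          * (((A (shift^[a] p))⁻¹ : GL (Fin d) ℝ) : Matrix (Fin d) (Fin d) ℝ) = 1 :=
        (A (shift^[a] p)).mul_inv
      simp only [Units.val_mul]
      exact ring_helper _ _ _ _ _ h1
    rw [key]
    have hdiff : ‖((A (shift^[a] z) : Matrix (Fin d) (Fin d) ℝ)
        - (A (shift^[a] p) : Matrix (Fin d) (Fin d) ℝ))‖ ≤ c₀ * Λ ^ t := by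
      have h := hH a (by omega)
      have hna : n - a = t + 1 := by omega
      rw [hna] at h
      refine h.trans ?_
      have : Λ ^ (t+1) ≤ Λ ^ t := pow_le_pow_of_le_one hΛ0 hΛ1 (by omega)
      exact mul_le_mul_of_nonneg_left this hc₀
    have hterm : ‖(coc A (shift^[a+1] z) t : Matrix (Fin d) (Fin d) ℝ)
            * (((A (shift^[a] z) : Matrix (Fin d) (Fin d) ℝ)
                - (A (shift^[a] p) : Matrix (Fin d) (Fin d) ℝ))
               * (((A (shift^[a] p))⁻¹ : GL (Fin d) ℝ) : Matrix (Fin d) (Fin d) ℝ))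
            * (((coc A (shift^[a+1] p) t)⁻¹ : GL (Fin d) ℝ) : Matrix (Fin d) (Fin d) ℝ)‖
        ≤ (K * E ^ t) * ((c₀ * Λ ^ t) * (K * E)) * (K * E ^ t) :=
      norm_mul₃ (hGz (a+1) t) (norm_mul₂ hdiff (hAp a)) (hGp (a+1) t)
    have heq : (K * E ^ t) * ((c₀ * Λ ^ t) * (K * E)) * (K * E ^ t)
        = K ^ 3 * c₀ * E * (E ^ 2 * Λ) ^ t := by ring
    calc ‖_ + _‖ ≤ _ := norm_add_le _ _
      _ ≤ (‖(1 : Matrix (Fin d) (Fin d) ℝ)‖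
            + K ^ 3 * c₀ * E * ∑ s ∈ Finset.range t, (E ^ 2 * Λ) ^ s)
          + K ^ 3 * c₀ * E * (E ^ 2 * Λ) ^ t := by
        apply add_le_add iht
        rw [← heq]; exact hterm
      _ = _ := by rw [Finset.sum_range_succ]; ring
end Aux2

/-- Closing construction: any finite orbit segment of length `n` can be closed up into a
periodic point of period `n + N`, using mixing to connect `x_n` back to `x_0`. -/
lemma periodic_construction {k : ℕ} {M : Matrix (Fin k) (Fin k) ℕ}
    (hM : ∀ i j, M i j = 0 ∨ M i j = 1) {N : ℕ} (hN : 1 ≤ N)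
    (hmix : ∀ i j, 0 < (M ^ N) i j) {x : ℤ → Fin k} (hx : x ∈ SFT M) (n : ℕ) :
    ∃ p : ℤ → Fin k, p ∈ SFT M ∧ shift^[n + N] p = p ∧
      ∀ i : ℤ, 0 ≤ i → i ≤ (n : ℤ) → p i = x i := by
  obtain ⟨w, hw0, hwN, hwt⟩ := path_of_pow_pos hM N (x (n : ℤ)) (x 0) (hmix _ _)
  set mz : ℤ := ((n + N : ℕ) : ℤ) with hmz
  have hm0 : 0 < mz := by omega
  set g : ℤ → Fin k := fun r => if r ≤ (n : ℤ) then x r else w (r - n).toNat with hg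
  set p : ℤ → Fin k := fun i => g (i % mz) with hp
  have gm : g mz = g 0 := by
    have h1 : ¬ (mz ≤ (n : ℤ)) := by omega
    have h2 : (mz - (n : ℤ)).toNat = N := by omega
    simp only [hg, h1, if_false, h2, hwN, if_pos (by omega : (0:ℤ) ≤ (n:ℤ))]
  have gtrans : ∀ r : ℤ, 0 ≤ r → r < mz → M (g r) (g (r + 1)) = 1 := by
    intro r h0 h1
    by_cases hr : r + 1 ≤ (n : ℤ)
    · have hr' : r ≤ (n : ℤ) := by omega
      simp only [hg, hr, hr', if_true]
      exact hx r
    · by_cases hr2 : r ≤ (n : ℤ)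
      · -- r = n
        have hrn : r = (n : ℤ) := by omega
        subst hrn
        simp only [hg]
        rw [if_pos (le_refl _), if_neg hr, show ((n : ℤ) + 1 - (n : ℤ)).toNat = 1 by omega,
          ← hw0]
        exact hwt 0 hN
      · have h2 : (r + 1 - (n : ℤ)).toNat = (r - (n : ℤ)).toNat + 1 := by omega
        have h3 : (r - (n : ℤ)).toNat < N := by omega
        simp only [hg, hr2, if_false, hr, if_false, h2]
        exact hwt _ h3
  have hmodfact : ∀ i : ℤ, 0 ≤ i % mz ∧ i % mz < mz :=
    fun i => ⟨Int.emod_nonneg i hm0.ne', Int.emod_lt_of_pos i hm0⟩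
  have hstep : ∀ i : ℤ, (i + 1) % mz = (i % mz + 1) % mz := by
    intro i
    conv_lhs => rw [show i + 1 = i % mz + 1 + mz * (i / mz) by
      have h := Int.mul_ediv_add_emod i mz; linarith]
    rw [Int.add_mul_emod_self_left]
  refine ⟨p, ?_, ?_, ?_⟩
  · intro i
    obtain ⟨h0, h1⟩ := hmodfact i
    show M (g (i % mz)) (g ((i + 1) % mz)) = 1
    rw [hstep]
    by_cases hcase : i % mz + 1 < mz
    · rw [Int.emod_eq_of_lt (by omega) hcase]
      exact gtrans _ h0 h1
    · have he : i % mz + 1 = mz := by omega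
      have ht := gtrans (i % mz) h0 h1
      rw [he] at ht
      rw [he, Int.emod_self, ← gm]
      exact ht
  · funext i
    rw [shift_iter_apply]
    show g ((i + ((n + N : ℕ) : ℤ)) % mz) = g (i % mz)
    rw [show i + ((n + N : ℕ) : ℤ) = i + mz * 1 by rw [hmz]; ring, Int.add_mul_emod_self_left]
  · intro i h0 hn'
    show g (i % mz) = x i
    rw [Int.emod_eq_of_lt h0 (by omega)]
    simp only [hg, hn', if_true]

/-- Proposition 3.7 for linear cocycles: over a mixing subshift of finite type, a β-Hölder
`GL(d,ℝ)`-valued cocycle with sub-exponential growth whose periodic data is bounded has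
a bounded set of values. -/
theorem stmt_11 (k d : ℕ) (hk : 1 ≤ k) (M : Matrix (Fin k) (Fin k) ℕ)
    (hM : ∀ i j, M i j = 0 ∨ M i j = 1)
    (N : ℕ) (hN : 1 ≤ N) (hmix : ∀ i j, 0 < (M ^ N) i j)
    (lam : ℝ) (hlam0 : 0 < lam) (hlam1 : lam < 1)
    (A : (ℤ → Fin k) → GL (Fin d) ℝ)
    (c₀ β : ℝ) (hc₀ : 0 < c₀) (hβ0 : 0 < β) (hβ1 : β ≤ 1)
    (hHolder : ∀ x ∈ SFT M, ∀ y ∈ SFT M,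
      ‖(A x : Matrix (Fin d) (Fin d) ℝ) - (A y : Matrix (Fin d) (Fin d) ℝ)‖
        ≤ c₀ * dSFT lam x y ^ β)
    (hgrowth : ∀ ε : ℝ, 0 < ε → ∃ K : ℝ, 1 ≤ K ∧ ∀ x ∈ SFT M, ∀ n : ℤ,
      ‖(cocZ A x n : Matrix (Fin d) (Fin d) ℝ)‖ ≤ K * Real.exp (ε * n.natAbs) ∧
      ‖(((cocZ A x n)⁻¹ : GL (Fin d) ℝ) : Matrix (Fin d) (Fin d) ℝ)‖
        ≤ K * Real.exp (ε * n.natAbs))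
    (C₀ : ℝ)
    (hper : ∀ p ∈ SFT M, ∀ m : ℕ, 1 ≤ m → shift^[m] p = p →
      ‖(coc A p m : Matrix (Fin d) (Fin d) ℝ)‖ ≤ C₀ ∧
      ‖(((coc A p m)⁻¹ : GL (Fin d) ℝ) : Matrix (Fin d) (Fin d) ℝ)‖ ≤ C₀) :
    ∃ C : ℝ, ∀ x ∈ SFT M, ∀ n : ℤ,
      ‖(cocZ A x n : Matrix (Fin d) (Fin d) ℝ)‖ ≤ C ∧
      ‖(((cocZ A x n)⁻¹ : GL (Fin d) ℝ) : Matrix (Fin d) (Fin d) ℝ)‖ ≤ C := by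
  -- constants
  have hL : 0 < -Real.log lam := by have := Real.log_neg hlam0 hlam1; linarith
  set L : ℝ := -Real.log lam with hLdef
  set ε : ℝ := β * L / 4 with hεdef
  have hε0 : 0 < ε := div_pos (mul_pos hβ0 hL) (by norm_num)
  obtain ⟨K, hK1, hKbd⟩ := hgrowth ε hε0
  have hK0 : 0 ≤ K := by linarith
  set E : ℝ := Real.exp ε with hEdef
  have hE0 : 0 < E := Real.exp_pos _
  set Λ : ℝ := lam ^ β with hΛdef
  have hΛ0 : 0 < Λ := Real.rpow_pos_of_pos hlam0 β
  have hΛ1 : Λ ≤ 1 := Real.rpow_le_one hlam0.le hlam1.le hβ0.le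
  set q : ℝ := E ^ 2 * Λ with hqdef
  have hq0 : 0 ≤ q := by positivity
  have hq1 : q < 1 := by
    have h1 : q = Real.exp (ε + ε + Real.log lam * β) := by
      rw [hqdef, hΛdef, Real.rpow_def_of_pos hlam0, hEdef, pow_two, ← Real.exp_add,
        ← Real.exp_add]
    rw [h1, Real.exp_lt_one_iff]
    have h2 : Real.log lam = -L := by rw [hLdef]; ring
    rw [h2, hεdef]
    have := mul_pos hβ0 hL
    nlinarith
  -- growth bounds for natural times
  have hgrow : ∀ y ∈ SFT M, ∀ j : ℕ,
      ‖(coc A y j : Matrix (Fin d) (Fin d) ℝ)‖ ≤ K * E ^ j ∧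
      ‖(((coc A y j)⁻¹ : GL (Fin d) ℝ) : Matrix (Fin d) (Fin d) ℝ)‖ ≤ K * E ^ j := by
    intro y hy j
    have h := hKbd y hy (j : ℤ)
    have hc : cocZ A y (j : ℤ) = coc A y j := by
      simp [cocZ, Int.toNat_natCast]
    have he : Real.exp (ε * ((j : ℤ).natAbs : ℝ)) = E ^ j := by
      rw [Int.natAbs_natCast, mul_comm, Real.exp_nat_mul, hEdef]
    rw [hc, he] at h
    exact h
  have coc_one : ∀ y, coc A y 1 = A y := by
    intro y; show A (shift^[0] y) * coc A y 0 = A y; simp [coc]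
  have hA : ∀ y ∈ SFT M,
      ‖(((A y)⁻¹ : GL (Fin d) ℝ) : Matrix (Fin d) (Fin d) ℝ)‖ ≤ K * E := by
    intro y hy
    have := (hgrow y hy 1).2
    rwa [coc_one, pow_one] at this
  -- Hölder consequence
  have hHol : ∀ u ∈ SFT M, ∀ v ∈ SFT M, ∀ j : ℕ, (∀ i : ℤ, i.natAbs < j → u i = v i) →
      ‖(A u : Matrix (Fin d) (Fin d) ℝ) - (A v : Matrix (Fin d) (Fin d) ℝ)‖
        ≤ c₀ * Λ ^ j := by
    intro u hu v hv j hag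
    refine (hHolder u hu v hv).trans ?_
    have hd := dSFT_le hlam0 hlam1 hag
    have hd0 := dSFT_nonneg hlam0 u v
    have h1 : dSFT lam u v ^ β ≤ ((lam ^ j : ℝ)) ^ β := Real.rpow_le_rpow hd0 hd hβ0.le
    have h2 : ((lam ^ j : ℝ)) ^ β = Λ ^ j := by
      rw [← Real.rpow_natCast lam j, ← Real.rpow_mul hlam0.le, mul_comm,
        Real.rpow_mul hlam0.le, Real.rpow_natCast, hΛdef]
    calc c₀ * dSFT lam u v ^ β ≤ c₀ * ((lam ^ j : ℝ)) ^ β :=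
          mul_le_mul_of_nonneg_left h1 hc₀.le
      _ = c₀ * Λ ^ j := by rw [h2]
  -- geometric sum bound
  have hltq : 0 < 1 - q := by linarith
  have hsum : ∀ t : ℕ, ∑ s ∈ Finset.range t, q ^ s ≤ (1 - q)⁻¹ := by
    intro t
    have hg := geom_sum_mul q t
    have hqt : (0:ℝ) ≤ q ^ t := pow_nonneg hq0 t
    have h2 : (∑ s ∈ Finset.range t, q ^ s) * (1 - q) = 1 - q ^ t := by
      linear_combination -hg
    rw [← one_div, le_div_iff₀ hltq, h2]
    linarith
  set B : ℝ := K ^ 3 * c₀ * E with hBdef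
  have hB0 : 0 ≤ B := by positivity
  set R1 : ℝ := ‖(1 : Matrix (Fin d) (Fin d) ℝ)‖ + B * (1 - q)⁻¹ with hR1def
  have hcap : ∀ t : ℕ,
      ‖(1 : Matrix (Fin d) (Fin d) ℝ)‖ + B * ∑ s ∈ Finset.range t, q ^ s ≤ R1 := by
    intro t
    rw [hR1def]
    exact add_le_add_right (mul_le_mul_of_nonneg_left (hsum t) hB0) _
  set D : ℝ := R1 * ((K * E ^ N) * C₀) * R1 with hDdef
  -- main bound for natural times
  have main : ∀ x ∈ SFT M, ∀ n : ℕ,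
      ‖(coc A x n : Matrix (Fin d) (Fin d) ℝ)‖ ≤ D ∧
      ‖(((coc A x n)⁻¹ : GL (Fin d) ℝ) : Matrix (Fin d) (Fin d) ℝ)‖ ≤ D := by
    intro x hx n
    obtain ⟨p, hpS, hperiod, hpag⟩ := periodic_construction hM hN hmix hx n
    set z : ℤ → Fin k := fun i => if 0 ≤ i then x i else p i with hzdef
    have hzx : ∀ i : ℤ, 0 ≤ i → z i = x i := by intro i hi; simp [hzdef, hi]
    have hzp : ∀ i : ℤ, i ≤ (n : ℤ) → z i = p i := by
      intro i hi
      by_cases h0 : 0 ≤ i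
      · simp only [hzdef, if_pos h0]; exact (hpag i h0 hi).symm
      · simp only [hzdef, if_neg h0]
    have hzS : z ∈ SFT M := by
      intro i
      by_cases h0 : 0 ≤ i
      · show M (z i) (z (i + 1)) = 1
        rw [hzx i h0, hzx (i + 1) (by omega)]
        exact hx i
      · show M (z i) (z (i + 1)) = 1
        rw [hzp i (by omega), hzp (i + 1) (by omega)]
        exact hpS i
    -- agreement along orbits
    have hagxz : ∀ j : ℕ, ∀ i : ℤ, i.natAbs < j → shift^[j] x i = shift^[j] z i := by
      intro j i hij
      rw [shift_iter_apply, shift_iter_apply]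
      exact (hzx (i + j) (by omega)).symm
    have hagzp : ∀ j : ℕ, j ≤ n → ∀ i : ℤ, i.natAbs < n - j →
        shift^[j] z i = shift^[j] p i := by
      intro j hj i hij
      rw [shift_iter_apply, shift_iter_apply]
      exact hzp (i + j) (by omega)
    have hHxz : ∀ j : ℕ, ‖(A (shift^[j] x) : Matrix (Fin d) (Fin d) ℝ)
        - (A (shift^[j] z) : Matrix (Fin d) (Fin d) ℝ)‖ ≤ c₀ * Λ ^ j :=
      fun j => hHol _ (SFT_shift_iter hx j) _ (SFT_shift_iter hzS j) j (hagxz j)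
    have hHzx : ∀ j : ℕ, ‖(A (shift^[j] z) : Matrix (Fin d) (Fin d) ℝ)
        - (A (shift^[j] x) : Matrix (Fin d) (Fin d) ℝ)‖ ≤ c₀ * Λ ^ j :=
      fun j => hHol _ (SFT_shift_iter hzS j) _ (SFT_shift_iter hx j) j
        (fun i h => (hagxz j i h).symm)
    have hHzp : ∀ j : ℕ, j ≤ n → ‖(A (shift^[j] z) : Matrix (Fin d) (Fin d) ℝ)
        - (A (shift^[j] p) : Matrix (Fin d) (Fin d) ℝ)‖ ≤ c₀ * Λ ^ (n - j) :=
      fun j hj => hHol _ (SFT_shift_iter hzS j) _ (SFT_shift_iter hpS j) (n - j) (hagzp j hj)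
    have hHpz : ∀ j : ℕ, j ≤ n → ‖(A (shift^[j] p) : Matrix (Fin d) (Fin d) ℝ)
        - (A (shift^[j] z) : Matrix (Fin d) (Fin d) ℝ)‖ ≤ c₀ * Λ ^ (n - j) :=
      fun j hj => hHol _ (SFT_shift_iter hpS j) _ (SFT_shift_iter hzS j) (n - j)
        (fun i h => (hagzp j hj i h).symm)
    -- stable comparisons
    have S1 := stable_aux A x z K E Λ c₀ hHxz (fun j => (hgrow x hx j).1)
      (fun j => (hgrow z hzS j).2) (fun j => hA _ (SFT_shift_iter hzS j)) n
    have S2 := stable_aux A z x K E Λ c₀ hHzx (fun j => (hgrow z hzS j).1)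
      (fun j => (hgrow x hx j).2) (fun j => hA _ (SFT_shift_iter hx j)) n
    have hS1 : ‖((((coc A z n)⁻¹ * coc A x n : GL (Fin d) ℝ))
        : Matrix (Fin d) (Fin d) ℝ)‖ ≤ R1 := S1.trans (hcap n)
    have hS2 : ‖((((coc A x n)⁻¹ * coc A z n : GL (Fin d) ℝ))
        : Matrix (Fin d) (Fin d) ℝ)‖ ≤ R1 := S2.trans (hcap n)
    -- unstable comparisons
    have U1 := unstable_aux A z p K E Λ c₀ hΛ0.le hΛ1 hc₀.le hK0 hE0.le n hHzp
      (fun a t => (hgrow _ (SFT_shift_iter hzS a) t).1)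
      (fun a t => (hgrow _ (SFT_shift_iter hpS a) t).2)
      (fun j => hA _ (SFT_shift_iter hpS j)) n le_rfl
    have U2 := unstable_aux A p z K E Λ c₀ hΛ0.le hΛ1 hc₀.le hK0 hE0.le n hHpz
      (fun a t => (hgrow _ (SFT_shift_iter hpS a) t).1)
      (fun a t => (hgrow _ (SFT_shift_iter hzS a) t).2)
      (fun j => hA _ (SFT_shift_iter hzS j)) n le_rfl
    simp only [Nat.sub_self, Function.iterate_zero, id_eq] at U1 U2
    have hU1 : ‖((coc A z n * (coc A p n)⁻¹ : GL (Fin d) ℝ)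
        : Matrix (Fin d) (Fin d) ℝ)‖ ≤ R1 := U1.trans (hcap n)
    have hU2 : ‖((coc A p n * (coc A z n)⁻¹ : GL (Fin d) ℝ)
        : Matrix (Fin d) (Fin d) ℝ)‖ ≤ R1 := U2.trans (hcap n)
    -- periodic bound
    have hperm := hper p hpS (n + N) (by omega) hperiod
    have hsplit : coc A p (n + N) = coc A (shift^[n] p) N * coc A p n := coc_add A p n N
    have hc1 : coc A p n = (coc A (shift^[n] p) N)⁻¹ * coc A p (n + N) := by
      rw [hsplit, inv_mul_cancel_left]
    have hPn : ‖((coc A p n : GL (Fin d) ℝ) : Matrix (Fin d) (Fin d) ℝ)‖ ≤ (K * E ^ N) * C₀ := by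
      rw [hc1, Units.val_mul]
      exact norm_mul₂ ((hgrow _ (SFT_shift_iter hpS n) N).2) hperm.1
    have hPninv : (coc A p n)⁻¹ = (coc A p (n + N))⁻¹ * coc A (shift^[n] p) N := by
      rw [hc1, mul_inv_rev, inv_inv]
    have hPn2 : ‖(((coc A p n)⁻¹ : GL (Fin d) ℝ) : Matrix (Fin d) (Fin d) ℝ)‖ ≤ C₀ * (K * E ^ N) := by
      rw [hPninv, Units.val_mul]
      exact norm_mul₂ hperm.2 ((hgrow _ (SFT_shift_iter hpS n) N).1)
    -- assemble
    constructor
    · have hxid : coc A x n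
          = (coc A z n * (coc A p n)⁻¹) * coc A p n * ((coc A z n)⁻¹ * coc A x n) := by
        group
      rw [hxid]
      simp only [Units.val_mul]
      refine (norm_mul₃ hU1 hPn hS1).trans (le_of_eq ?_)
      rw [hDdef]; try ring
    · have hxid : (coc A x n)⁻¹
          = ((coc A x n)⁻¹ * coc A z n) * (coc A p n)⁻¹ * (coc A p n * (coc A z n)⁻¹) := by
        group
      rw [hxid]
      simp only [Units.val_mul]
      refine (norm_mul₃ hS2 hPn2 hU2).trans (le_of_eq ?_)
      rw [hDdef]; try ring
  -- conclude for integer times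
  refine ⟨D, ?_⟩
  intro x hx n
  rcases le_or_gt 0 n with hn | hn
  · have h1 : cocZ A x n = coc A x n.toNat := by simp [cocZ, hn]
    rw [h1]
    exact main x hx n.toNat
  · have h1 : cocZ A x n = (coc A (shiftInv^[(-n).toNat] x) (-n).toNat)⁻¹ := by
      simp [cocZ, not_le.mpr hn]
    have hy := SFT_shiftInv_iter hx (-n).toNat
    rw [h1]
    refine ⟨(main _ hy _).2, ?_⟩
    rw [inv_inv]
    exact (main _ hy _).1
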